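/- Let ρ > 0 and let (p, ξ) : [0, T] → ℝ^d × ℝ^d be a differentiable solution of the subsystem ṗ = −ξ ⋆ p, ξ̇ = [p]²/ρ. Then for each coordinate i, the quantity p_i(t)² + ρ·ξ_i(t)² is constant in t; equivalently, for all t ∈ [0, T] and all i, p_i(t)² + ρ·ξ_i(t)² = p_i(0)² + ρ·ξ_i(0)². -/

import Mathlib

/-- Componentwise (Hadamard) product of two vectors in `ℝ^d`. -/
noncomputable def cwMul {d : ℕ} (a b : EuclideanSpace ℝ (Fin d)) :
    EuclideanSpace ℝ (Fin d) := WithLp.toLp 2 (fun i => a i * b i)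

/-- Componentwise square of a vector in `ℝ^d`. -/
noncomputable def cwSq {d : ℕ} (a : EuclideanSpace ℝ (Fin d)) :
    EuclideanSpace ℝ (Fin d) := WithLp.toLp 2 (fun i => a i ^ 2)

/-- Along the `C` step subsystem `ṗ = -ξ ⋆ p`, `ξ̇ = [p]²/ρ` of the iKFAD
splitting, the quantity `pᵢ(t)² + ρ ξᵢ(t)²` is conserved in each coordinate. -/
theorem ikfad_C_step_invariant
    (d : ℕ) (ρ : ℝ) (hρ : 0 < ρ) (T : ℝ) (hT : 0 ≤ T)
    (p ξ : ℝ → EuclideanSpace ℝ (Fin d))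
    (hp : ∀ t ∈ Set.Icc (0 : ℝ) T, HasDerivAt p (-cwMul (ξ t) (p t)) t)
    (hξ : ∀ t ∈ Set.Icc (0 : ℝ) T, HasDerivAt ξ (ρ⁻¹ • cwSq (p t)) t) :
    ∀ t ∈ Set.Icc (0 : ℝ) T, ∀ i : Fin d,
      (p t i) ^ 2 + ρ * (ξ t i) ^ 2 = (p 0 i) ^ 2 + ρ * (ξ 0 i) ^ 2 := by
  intro t ht i
  set g : ℝ → ℝ := fun s => (p s i) ^ 2 + ρ * (ξ s i) ^ 2 with hg
  have hderiv : ∀ s ∈ Set.Icc (0 : ℝ) T, HasDerivAt g 0 s := by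
    intro s hs
    have hpi : HasDerivAt (fun u => p u i) (-(ξ s i * p s i)) s := by
      have := (EuclideanSpace.proj (𝕜 := ℝ) i).hasFDerivAt.comp_hasDerivAt s (hp s hs)
      simp [cwMul] at this
      exact this
    have hxi : HasDerivAt (fun u => ξ u i) (ρ⁻¹ * (p s i) ^ 2) s := by
      have := (EuclideanSpace.proj (𝕜 := ℝ) i).hasFDerivAt.comp_hasDerivAt s (hξ s hs)
      simp [cwSq] at this
      exact this
    have h1 := hpi.pow 2
    have h2 := (hxi.pow 2).const_mul ρ
    have := h1.add h2
    refine this.congr_deriv ?_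
    have hρ0 : ρ ≠ 0 := hρ.ne'
    field_simp
    ring
  have hcont : ContinuousOn g (Set.Icc 0 T) :=
    fun s hs => ((hderiv s hs).continuousAt).continuousWithinAt
  have hkey := constant_of_has_deriv_right_zero hcont
    (fun x hx => ((hderiv x (Set.mem_Icc_of_Ico hx)).hasDerivWithinAt))
  exact hkey t ht
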